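/- The fundamental representation π₂ is irreducible: every ℚ(q)-linear subspace V ⊆ F satisfying π₂(t_{ij})(V) ⊆ V for all 1 ≤ i,j ≤ 7 is either {0} or all of F. -/

import Mathlib

open TensorProduct

noncomputable section

abbrev Fq : Type := RatFunc ℚ

def q : Fq := RatFunc.X

abbrev F : Type := ℕ →₀ Fq

def ket (m : ℕ) : F := Finsupp.single m 1

/-- Linear operator on the Fock space from its action on the basis. -/
def opOf (v : ℕ → F) : F →ₗ[Fq] F := Finsupp.lift F Fq ℕ v

/-- q²-oscillator K -/
def K2 : F →ₗ[Fq] F := opOf fun m => q ^ (2 * m) • ket m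
/-- q²-oscillator A⁺ -/
def Ap : F →ₗ[Fq] F := opOf fun m => ket (m + 1)
/-- q²-oscillator A⁻ -/
def Am : F →ₗ[Fq] F := opOf fun m => (1 - q ^ (4 * m)) • ket (m - 1)
/-- q-oscillator k -/
def kk : F →ₗ[Fq] F := opOf fun m => q ^ m • ket m
/-- q-oscillator a⁺ -/
def ap : F →ₗ[Fq] F := opOf fun m => ket (m + 1)
/-- q-oscillator a⁻ -/
def am : F →ₗ[Fq] F := opOf fun m => (1 - q ^ (2 * m)) • ket (m - 1)

def pi1 (α β μ ν κ σ : Fq) : Matrix (Fin 7) (Fin 7) (F →ₗ[Fq] F) :=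
  !![μ • Am, α • K2, 0, 0, 0, 0, 0;
     β • K2, ν • Ap, 0, 0, 0, 0, 0;
     0, 0, κ • LinearMap.id, 0, 0, 0, 0;
     0, 0, 0, σ • LinearMap.id, 0, 0, 0;
     0, 0, 0, 0, κ⁻¹ • LinearMap.id, 0, 0;
     0, 0, 0, 0, 0, ν⁻¹ • Am, (q ^ 2 * β⁻¹) • K2;
     0, 0, 0, 0, 0, (q ^ 2 * α⁻¹) • K2, μ⁻¹ • Ap]

def pi2 (α β μ ν κ σ : Fq) : Matrix (Fin 7) (Fin 7) (F →ₗ[Fq] F) :=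
  !![κ • LinearMap.id, 0, 0, 0, 0, 0, 0;
     0, μ • Am, α • K2, 0, 0, 0, 0;
     0, β • K2, ν • Ap, 0, 0, 0, 0;
     0, 0, 0, σ • LinearMap.id, 0, 0, 0;
     0, 0, 0, 0, ν⁻¹ • Am, (q ^ 2 * β⁻¹) • K2, 0;
     0, 0, 0, 0, (q ^ 2 * α⁻¹) • K2, μ⁻¹ • Ap, 0;
     0, 0, 0, 0, 0, 0, κ⁻¹ • LinearMap.id]

def pi3 (α μ κa κb : Fq) : Matrix (Fin 7) (Fin 7) (F →ₗ[Fq] F) :=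
  !![κa • LinearMap.id, 0, 0, 0, 0, 0, 0;
     0, κb • LinearMap.id, 0, 0, 0, 0, 0;
     0, 0, μ • (am ∘ₗ am), α • (kk ∘ₗ am), (-((1 + q ^ 2) * μ)⁻¹ * α ^ 2) • (kk ∘ₗ kk), 0, 0;
     0, 0, (-(1 + q ^ 2) * α⁻¹ * μ) • (am ∘ₗ kk), am ∘ₗ ap - kk ∘ₗ kk, (-(q * μ)⁻¹ * α) • (kk ∘ₗ ap), 0, 0;
     0, 0, (-(1 + q ^ 2) * q ^ 2 * α⁻¹ ^ 2 * μ) • (kk ∘ₗ kk), ((1 + q ^ 2) * α⁻¹) • (kk ∘ₗ ap), μ⁻¹ • (ap ∘ₗ ap), 0, 0;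
     0, 0, 0, 0, 0, κb⁻¹ • LinearMap.id, 0;
     0, 0, 0, 0, 0, 0, κa⁻¹ • LinearMap.id]

def rhoB : Fin 7 → ℤ := ![5, 3, 1, 0, -1, -3, -5]

def CB : Matrix (Fin 7) (Fin 7) Fq := fun i j => if (i : ℕ) + (j : ℕ) = 6 then q ^ rhoB j else 0

lemma opOf_single (v : ℕ → F) (m : ℕ) (c : Fq) :
    opOf v (Finsupp.single m c) = c • v m := by
  simp [opOf, Finsupp.lift_apply, Finsupp.sum_single_index]

lemma opOf_ket (v : ℕ → F) (m : ℕ) : opOf v (ket m) = v m := by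
  simp [ket, opOf_single]

lemma q_pow_inj : Function.Injective (fun n : ℕ => q ^ n) := by
  intro a b h
  have h2 : (algebraMap (Polynomial ℚ) Fq) (Polynomial.X ^ a)
      = (algebraMap (Polynomial ℚ) Fq) (Polynomial.X ^ b) := by
    simpa [map_pow, RatFunc.algebraMap_X, q] using h
  have := RatFunc.algebraMap_injective ℚ h2
  have := congrArg Polynomial.natDegree this
  simpa using this

lemma K2_apply (v : F) (n : ℕ) : K2 v n = q ^ (2 * n) * v n := by
  induction v using Finsupp.induction_linear with
  | zero => simp
  | add f g hf hg => simp [hf, hg, mul_add]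
  | single m c =>
    rw [K2, opOf_single]
    by_cases h : m = n
    · subst h; simp [ket, Finsupp.single_apply, mul_comm]
    · simp [ket, Finsupp.single_apply, h]

lemma K2_ket (m : ℕ) : K2 (ket m) = q ^ (2 * m) • ket m := by
  rw [K2, opOf_ket]

lemma Ap_ket (m : ℕ) : Ap (ket m) = ket (m + 1) := by
  rw [Ap, opOf_ket]

lemma Am_ket (m : ℕ) : Am (ket m) = (1 - q ^ (4 * m)) • ket (m - 1) := by
  rw [Am, opOf_ket]

lemma sep (V : Submodule Fq F) (hK : ∀ v ∈ V, K2 v ∈ V) :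
    ∀ n : ℕ, ∀ v : F, v.support.card ≤ n → v ∈ V → ∀ m ∈ v.support, ket m ∈ V := by
  intro n
  induction n with
  | zero =>
    intro v hc _ m hm
    rw [Nat.le_zero, Finset.card_eq_zero] at hc
    simp [hc] at hm
  | succ n ih =>
    intro v hc hv m hm
    set w : F := K2 v - q ^ (2 * m) • v with hw
    have hwV : w ∈ V := V.sub_mem (hK v hv) (V.smul_mem _ hv)
    have hwapp : ∀ k, w k = (q ^ (2 * k) - q ^ (2 * m)) * v k := by
      intro k
      simp [hw, K2_apply, sub_mul]
    have hsupp : w.support = v.support.erase m := by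
      ext k
      simp only [Finsupp.mem_support_iff, Finset.mem_erase, hwapp]
      constructor
      · intro h
        refine ⟨?_, fun h0 => h (by simp [h0])⟩
        rintro rfl
        simp at h
      · rintro ⟨hkm, hk⟩
        exact mul_ne_zero (sub_ne_zero.2 fun h => hkm (by
          have := q_pow_inj h; omega)) hk
    have hket' : ∀ k ∈ v.support.erase m, ket k ∈ V := by
      intro k hk
      refine ih w ?_ hwV k (by rw [hsupp]; exact hk)
      rw [hsupp]
      have := Finset.card_erase_lt_of_mem hm
      omega
    -- now isolate ket m
    have hsum : Finsupp.single m (v m) = v - ∑ k ∈ v.support.erase m, Finsupp.single k (v k) := by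
      have h1 : (Finsupp.single m (v m)) + ∑ k ∈ v.support.erase m, Finsupp.single k (v k)
          = ∑ k ∈ v.support, Finsupp.single k (v k) := Finset.add_sum_erase _ _ hm
      have h2 : ∑ k ∈ v.support, Finsupp.single k (v k) = v := by
        exact Finsupp.sum_single v
      rw [h2] at h1
      linear_combination (norm := abel) h1
    have hmemsum : (∑ k ∈ v.support.erase m, Finsupp.single k (v k)) ∈ V := by
      refine Submodule.sum_mem V fun k hk => ?_
      have : Finsupp.single k (v k) = (v k) • ket k := by
        simp [ket, Finsupp.smul_single]
      rw [this]
      exact V.smul_mem _ (hket' k hk)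
    have hmem : Finsupp.single m (v m) ∈ V := by
      rw [hsum]; exact V.sub_mem hv hmemsum
    have hvm : v m ≠ 0 := Finsupp.mem_support_iff.mp hm
    have : ket m = (v m)⁻¹ • Finsupp.single m (v m) := by
      simp [ket, Finsupp.smul_single, inv_mul_cancel₀ hvm]
    rw [this]
    exact V.smul_mem _ hmem

/-- the fundamental representation π₂ is irreducible. -/
theorem pi2_irreducible
    (α β μ ν κ σ : Fq) (hα : α ≠ 0) (hβ : β ≠ 0) (hμ : μ ≠ 0) (hν : ν ≠ 0)
    (hκ : κ ≠ 0) (hσ0 : σ ≠ 0)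
    (hrel : α * β = -q ^ 2 * (μ * ν)) (hσ : σ = 1 ∨ σ = -1) :
    ∀ V : Submodule Fq F,
      (∀ i j : Fin 7, ∀ v ∈ V, pi2 α β μ ν κ σ i j v ∈ V) → V = ⊥ ∨ V = ⊤ := by
  intro V hV
  by_cases hbot : V = ⊥
  · exact Or.inl hbot
  right
  obtain ⟨v, hvV, hv0⟩ := (Submodule.ne_bot_iff V).mp hbot
  have hinv : ∀ (c : Fq), c ≠ 0 → ∀ x : F, c • x ∈ V → x ∈ V := by
    intro c hc x hx
    have := V.smul_mem c⁻¹ hx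
    rwa [smul_smul, inv_mul_cancel₀ hc, one_smul] at this
  have hK : ∀ u ∈ V, K2 u ∈ V := by
    intro u hu
    have h := hV 1 2 u hu
    rw [show pi2 α β μ ν κ σ 1 2 = α • K2 from rfl, LinearMap.smul_apply] at h
    exact hinv α hα _ h
  have hAp : ∀ u ∈ V, Ap u ∈ V := by
    intro u hu
    have h := hV 2 2 u hu
    rw [show pi2 α β μ ν κ σ 2 2 = ν • Ap from rfl, LinearMap.smul_apply] at h
    exact hinv ν hν _ h
  have hAm : ∀ u ∈ V, Am u ∈ V := by
    intro u hu
    have h := hV 1 1 u hu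
    rw [show pi2 α β μ ν κ σ 1 1 = μ • Am from rfl, LinearMap.smul_apply] at h
    exact hinv μ hμ _ h
  obtain ⟨m, hm⟩ := Finsupp.support_nonempty_iff.mpr hv0
  have hketm : ket m ∈ V := sep V hK v.support.card v le_rfl hvV m hm
  have down : ∀ k, ket k ∈ V → ket 0 ∈ V := by
    intro k
    induction k with
    | zero => exact id
    | succ n ih =>
      intro h
      apply ih
      have h2 := hAm _ h
      rw [Am_ket] at h2
      have hne : (1 - q ^ (4 * (n + 1))) ≠ 0 := by
        intro h0
        have hq : q ^ (4 * (n + 1)) = q ^ 0 := by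
          rw [pow_zero]; exact (sub_eq_zero.mp h0).symm
        have := q_pow_inj hq; omega
      simpa using hinv _ hne _ h2
  have h0 : ket 0 ∈ V := down m hketm
  have up : ∀ k, ket k ∈ V := by
    intro k
    induction k with
    | zero => exact h0
    | succ n ih =>
      have := hAp _ ih
      rwa [Ap_ket] at this
  rw [Submodule.eq_top_iff']
  intro u
  have hu : u = ∑ k ∈ u.support, (u k) • ket k := by
    conv_lhs => rw [← Finsupp.sum_single u]
    rw [Finsupp.sum]
    refine Finset.sum_congr rfl fun k _ => ?_
    simp [ket, Finsupp.smul_single]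
  rw [hu]
  exact Submodule.sum_mem V fun k _ => V.smul_mem _ (up k)
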